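/- Let α be a finite type, let g : α → α → Bool be regular with respect to a subgroup S of Equiv.Perm α × Equiv.Perm α, let m be the cardinality of S and fix an enumeration e : Fin m ≃ S. Let N = 2^n and let a, b : Fin N → (Fin n → α). Suppose the map z : Fin N → (Fin n → Bool) defined by z j = (fun i => g (a j i) (b j i)) is 2-to-1, i.e. every value in its range has exactly two preimages. Then the combined map U : Fin N × (Fin n → Fin m) → (Fin n → α) × (Fin n → α) defined by U(j, I) = Unfold(a j, b j)(I) is also 2-to-1: every pair in the range of U has exactly two preimages (j, I). -/
import Mathlib


/-- A bipartite Boolean function `g` is regular with respect to a subgroup `S` of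
`Equiv.Perm α × Equiv.Perm α` if the coordinatewise action of `S` preserves `g` and `S`
acts simply transitively on each fiber of `g`. -/
def IsRegularGadget {α : Type*} (g : α → α → Bool)
    (S : Subgroup (Equiv.Perm α × Equiv.Perm α)) : Prop :=
  (∀ s ∈ S, ∀ x y : α, g (s.1 x) (s.2 y) = g x y) ∧
  (∀ x₁ y₁ x₂ y₂ : α, g x₁ y₁ = g x₂ y₂ →
    ∃! s : S, ((s : Equiv.Perm α × Equiv.Perm α).1 x₁,
               (s : Equiv.Perm α × Equiv.Perm α).2 y₁) = (x₂, y₂))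

/-- The `Unfold` map: given an enumeration `e : Fin m ≃ S` of the symmetry group and an
input `(a, b)` to `g^n`, it sends an index tuple `I : Fin n → Fin m` to the input to `g^n`
obtained by applying the `I i`-th symmetry in the `i`-th coordinate. -/
def Unfold {α : Type*} {S : Subgroup (Equiv.Perm α × Equiv.Perm α)} {m n : ℕ}
    (e : Fin m ≃ S) (a b : Fin n → α) (I : Fin n → Fin m) :
    (Fin n → α) × (Fin n → α) :=
  (fun i => (e (I i) : Equiv.Perm α × Equiv.Perm α).1 (a i),
   fun i => (e (I i) : Equiv.Perm α × Equiv.Perm α).2 (b i))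

/-- If the encoded input `z : j ↦ g^n(a j, b j)` to the Collision problem is 2-to-1, then
the combined map `U : (j, I) ↦ Unfold (a j, b j) I` produces a 2-to-1 list: every pair in
the range of `U` has exactly two preimages. -/
theorem unfold_two_to_one {α : Type*} [Fintype α]
    (g : α → α → Bool) (S : Subgroup (Equiv.Perm α × Equiv.Perm α))
    (hreg : IsRegularGadget g S) {m n N : ℕ} (hN : N = 2 ^ n) (e : Fin m ≃ S)
    (a b : Fin N → (Fin n → α))
    (h2to1 : ∀ w : Fin n → Bool, (∃ j, (fun i => g (a j i) (b j i)) = w) →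
      Nat.card {j : Fin N // (fun i => g (a j i) (b j i)) = w} = 2) :
    ∀ p : (Fin n → α) × (Fin n → α),
      (∃ jI : Fin N × (Fin n → Fin m), Unfold e (a jI.1) (b jI.1) jI.2 = p) →
      Nat.card {jI : Fin N × (Fin n → Fin m) // Unfold e (a jI.1) (b jI.1) jI.2 = p} = 2 := by
  rintro p ⟨⟨j0, I0⟩, h0⟩
  set w : Fin n → Bool := fun i => g (p.1 i) (p.2 i) with hw
  -- key: if U (j, I) = p then z j = w
  have key : ∀ j (I : Fin n → Fin m), Unfold e (a j) (b j) I = p →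
      (fun i => g (a j i) (b j i)) = w := by
    intro j I h
    funext i
    have h1 : (e (I i) : Equiv.Perm α × Equiv.Perm α).1 (a j i) = p.1 i :=
      congrFun (congrArg Prod.fst h) i
    have h2 : (e (I i) : Equiv.Perm α × Equiv.Perm α).2 (b j i) = p.2 i :=
      congrFun (congrArg Prod.snd h) i
    have := hreg.1 (e (I i)) (e (I i)).2 (a j i) (b j i)
    simp only [hw]
    rw [← h1, ← h2, this]
  -- bijection between the fiber of U over p and the fiber of z over w
  let f : {jI : Fin N × (Fin n → Fin m) // Unfold e (a jI.1) (b jI.1) jI.2 = p} →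
      {j : Fin N // (fun i => g (a j i) (b j i)) = w} :=
    fun x => ⟨x.1.1, key x.1.1 x.1.2 x.2⟩
  have hinj : Function.Injective f := by
    rintro ⟨⟨j, I⟩, h⟩ ⟨⟨j', I'⟩, h'⟩ hf
    have hj : j = j' := congrArg Subtype.val hf
    subst hj
    have hI : I = I' := by
      funext i
      have hg : g (a j i) (b j i) = g (p.1 i) (p.2 i) :=
        congrFun (key j I h) i
      obtain ⟨s, -, huniq⟩ := hreg.2 (a j i) (b j i) (p.1 i) (p.2 i) hg
      have e1 : e (I i) = s := huniq (e (I i)) (by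
        have h1 : (e (I i) : Equiv.Perm α × Equiv.Perm α).1 (a j i) = p.1 i :=
          congrFun (congrArg Prod.fst h) i
        have h2 : (e (I i) : Equiv.Perm α × Equiv.Perm α).2 (b j i) = p.2 i :=
          congrFun (congrArg Prod.snd h) i
        simp [h1, h2])
      have e2 : e (I' i) = s := huniq (e (I' i)) (by
        have h1 : (e (I' i) : Equiv.Perm α × Equiv.Perm α).1 (a j i) = p.1 i :=
          congrFun (congrArg Prod.fst h') i
        have h2 : (e (I' i) : Equiv.Perm α × Equiv.Perm α).2 (b j i) = p.2 i :=
          congrFun (congrArg Prod.snd h') i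
        simp [h1, h2])
      exact e.injective (e1.trans e2.symm)
    subst hI
    rfl
  have hsurj : Function.Surjective f := by
    rintro ⟨j, hj⟩
    have hg : ∀ i, g (a j i) (b j i) = g (p.1 i) (p.2 i) := fun i => congrFun hj i
    choose s hs _ using fun i => hreg.2 (a j i) (b j i) (p.1 i) (p.2 i) (hg i)
    refine ⟨⟨⟨j, fun i => e.symm (s i)⟩, ?_⟩, rfl⟩
    have : Unfold e (a j) (b j) (fun i => e.symm (s i)) = p := by
      unfold Unfold
      ext i
      · simpa using congrArg Prod.fst (hs i)
      · simpa using congrArg Prod.snd (hs i)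
    exact this
  rw [Nat.card_congr (Equiv.ofBijective f ⟨hinj, hsurj⟩)]
  exact h2to1 w ⟨j0, key j0 I0 h0⟩
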